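/- Assume moreover that {i ∈ ℐ : |i|_ℐ ≤ R} is finite for every R > 0, and write B_R(ℐ) := {i ∈ ℐ : |i|_ℐ ≤ R}. Then for every (y, g) ∈ Δ_ℐ^free × Γ and every C > 0: if |(y, g)|_free ≤ C·|supp(y)|, then |(y, g)|_free ≤ 4C·|B_{2C}(ℐ)|, where |supp(y)| and |B_{2C}(ℐ)| denote cardinalities. -/

import Mathlib

noncomputable section

/-- The ℓ¹-norm of a finitely supported real-valued function. -/
def l1Norm {X : Type*} (φ : X →₀ ℝ) : ℝ := ∑ x ∈ φ.support, |φ x|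

variable {ι Δ Γ : Type*} [Group Δ] [Group Γ] [MulAction Γ ι]
  [DecidableEq ι] [DecidableEq Δ]

/-- The action of `Γ` on the free product `∗_{i∈ι} Δ` permuting the factors. -/
def permHom (g : Γ) :
    Monoid.CoprodI (fun _ : ι => Δ) →* Monoid.CoprodI (fun _ : ι => Δ) :=
  Monoid.CoprodI.lift fun i => Monoid.CoprodI.of (M := fun _ : ι => Δ) (i := g • i)

/-- The reduced word of an element of the free product, as a list of letters. -/
def wordList (y : Monoid.CoprodI (fun _ : ι => Δ)) : List (Σ _ : ι, Δ) :=
  (Monoid.CoprodI.Word.equiv y).toList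

/-- The support `supp(y) ⊆ ι` of an element of the free product. -/
def freeSupp (y : Monoid.CoprodI (fun _ : ι => Δ)) : Finset ι :=
  ((wordList y).map Sigma.fst).toFinset

/-- `a(y) := Σₖ |y_{iₖ}|_Δ·δ_{iₖ}`. -/
def aFn (nD : Δ → ℝ) (y : Monoid.CoprodI (fun _ : ι => Δ)) : ι →₀ ℝ :=
  ((wordList y).map fun p => Finsupp.single p.1 (nD p.2)).sum

/-- `m(y, g) := Σ_{i ∈ supp(y)} min{|i|_ι, |g⁻¹·i|_ι}·δ_i`. -/
def mFn (nI : ι → ℝ) (y : Monoid.CoprodI (fun _ : ι => Δ)) (g : Γ) : ι →₀ ℝ :=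
  ∑ i ∈ freeSupp y, Finsupp.single i (min (nI i) (nI (g⁻¹ • i)))

/-- `ω(y, g) := m(y, g) + a(y)`. -/
def omegaFree (nI : ι → ℝ) (nD : Δ → ℝ)
    (y : Monoid.CoprodI (fun _ : ι => Δ)) (g : Γ) : ι →₀ ℝ :=
  mFn nI y g + aFn nD y


/-- `|(y, g)|_free := ‖ω(y, g)‖₁`. -/
def freeLen (nI : ι → ℝ) (nD : Δ → ℝ)
    (y : Monoid.CoprodI (fun _ : ι => Δ)) (g : Γ) : ℝ :=
  l1Norm (omegaFree nI nD y g)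

/-- Summing the values of a finitely supported function, as an additive hom. -/
def Sv {X : Type*} : (X →₀ ℝ) →+ ℝ := Finsupp.liftAddHom fun _ => AddMonoidHom.id ℝ

lemma Sv_single {X : Type*} (i : X) (c : ℝ) : Sv (Finsupp.single i c) = c := by
  simp [Sv]

lemma Sv_apply {X : Type*} (φ : X →₀ ℝ) : Sv φ = ∑ x ∈ φ.support, φ x := by
  rw [Sv, Finsupp.liftAddHom_apply]; rfl

lemma l1Norm_eq_Sv {X : Type*} (φ : X →₀ ℝ) (h : ∀ x, 0 ≤ φ x) : l1Norm φ = Sv φ := by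
  rw [Sv_apply, l1Norm]
  exact Finset.sum_congr rfl fun x _ => abs_of_nonneg (h x)

lemma list_sum_nonneg {X : Type*} (L : List (X →₀ ℝ)) (h : ∀ ψ ∈ L, ∀ i, 0 ≤ ψ i) :
    ∀ i, 0 ≤ L.sum i := by
  induction L with
  | nil => simp
  | cons a t ih =>
    intro i
    rw [List.sum_cons, Finsupp.add_apply]
    exact add_nonneg (h a List.mem_cons_self i)
      (ih (fun ψ hψ => h ψ (List.mem_cons_of_mem _ hψ)) i)

lemma length_le_sum (l : List ℝ) (h : ∀ x ∈ l, (1:ℝ) ≤ x) : (l.length : ℝ) ≤ l.sum := by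
  induction l with
  | nil => simp
  | cons a t ih =>
    simp only [List.length_cons, List.sum_cons, Nat.cast_add, Nat.cast_one]
    have h1 := ih fun x hx => h x (List.mem_cons_of_mem _ hx)
    have h2 := h a List.mem_cons_self
    linarith

/-- If `|(y, g)|_free ≤ C·|supp(y)|` then `|(y, g)|_free ≤ 4C·|B_{2C}(ι)|`, where
`B_R(ι) = {i : |i|_ι ≤ R}` is finite. -/
theorem freeLen_le_of_le_card_supp (nI : ι → ℝ) (nG : Γ → ℝ) (nD : Δ → ℝ)
    (hI0 : ∀ i, 0 ≤ nI i) (hG0 : ∀ g, 0 ≤ nG g)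
    (hcompat : ∀ (g : Γ) (i : ι), nI (g • i) ≤ nG g + nI i)
    (hsymm : ∀ g : Γ, nG g⁻¹ = nG g)
    (hDe : nD 1 = 0) (hD1 : ∀ d : Δ, d ≠ 1 → 1 ≤ nD d)
    (hfin : ∀ R : ℝ, 0 < R → {i : ι | nI i ≤ R}.Finite)
    (y : Monoid.CoprodI (fun _ : ι => Δ)) (g : Γ) (C : ℝ) (hC : 0 < C)
    (hle : freeLen nI nD y g ≤ C * (freeSupp y).card) :
    freeLen nI nD y g ≤ 4 * C * (Nat.card ↥{i : ι | nI i ≤ 2 * C}) := by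
  classical
  -- letters of the word are nonidentity
  have hne : ∀ p ∈ wordList y, p.2 ≠ (1 : Δ) :=
    fun p hp => (Monoid.CoprodI.Word.equiv y).ne_one p hp
  -- pointwise nonnegativity
  have hm0 : ∀ i, 0 ≤ mFn nI y g i := by
    intro i
    rw [mFn, Finset.sum_apply']
    refine Finset.sum_nonneg fun j _ => ?_
    rw [Finsupp.single_apply]
    split <;> simp [le_min (hI0 _) (hI0 _)]
  have ha0 : ∀ i, 0 ≤ aFn nD y i := by
    refine list_sum_nonneg _ fun ψ hψ i => ?_
    obtain ⟨p, hp, rfl⟩ := List.mem_map.mp hψ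
    rw [Finsupp.single_apply]
    split <;> [exact le_trans zero_le_one (hD1 _ (hne p hp)); rfl]
  -- freeLen = Sv m + Sv a
  have hsplit : freeLen nI nD y g = Sv (mFn nI y g) + Sv (aFn nD y) := by
    rw [freeLen, omegaFree, l1Norm_eq_Sv _ (fun i => by
      rw [Finsupp.add_apply]; exact add_nonneg (hm0 i) (ha0 i)), map_add]
  -- Sv m as a sum of mins
  have hSvm : Sv (mFn nI y g) = ∑ i ∈ freeSupp y, min (nI i) (nI (g⁻¹ • i)) := by
    rw [mFn, map_sum]
    exact Finset.sum_congr rfl fun i _ => Sv_single _ _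
  -- Sv a ≥ card of support
  have hSva : ((freeSupp y).card : ℝ) ≤ Sv (aFn nD y) := by
    have h1 : Sv (aFn nD y) = ((wordList y).map fun p => nD p.2).sum := by
      rw [aFn, map_list_sum, List.map_map]
      congr 1
      exact List.map_congr_left fun p _ => Sv_single _ _
    have h2 : (((wordList y).map fun p => nD p.2).length : ℝ) ≤
        ((wordList y).map fun p => nD p.2).sum := by
      refine length_le_sum _ fun x hx => ?_
      obtain ⟨p, hp, rfl⟩ := List.mem_map.mp hx
      exact hD1 _ (hne p hp)
    have h3 : (freeSupp y).card ≤ (wordList y).length := by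
      have := List.toFinset_card_le ((wordList y).map Sigma.fst)
      rwa [List.length_map] at this
    rw [h1]
    calc ((freeSupp y).card : ℝ) ≤ ((wordList y).length : ℝ) := by exact_mod_cast h3
    _ = (((wordList y).map fun p => nD p.2).length : ℝ) := by rw [List.length_map]
    _ ≤ _ := h2
  -- the ball as a finset
  have h2C : (0:ℝ) < 2 * C := by linarith
  set Bfin : Finset ι := (hfin (2*C) h2C).toFinset with hBfin
  have hcard : (Nat.card ↥{i : ι | nI i ≤ 2 * C}) = Bfin.card := by
    rw [Nat.card_coe_set_eq, Set.ncard_eq_toFinset_card _ (hfin (2*C) h2C)]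
  -- split the support
  set S := (freeSupp y).filter (fun i => min (nI i) (nI (g⁻¹ • i)) ≤ 2*C) with hS
  set T := (freeSupp y).filter (fun i => ¬ min (nI i) (nI (g⁻¹ • i)) ≤ 2*C) with hT
  have hST : S.card + T.card = (freeSupp y).card :=
    Finset.card_filter_add_card_filter_not _
  -- T contributes ≥ 2C each to Sv m
  have hTm : (T.card : ℝ) * (2*C) ≤ Sv (mFn nI y g) := by
    rw [hSvm]
    calc (T.card : ℝ) * (2*C) = ∑ _i ∈ T, 2*C := by rw [Finset.sum_const]; ring
    _ ≤ ∑ i ∈ T, min (nI i) (nI (g⁻¹ • i)) :=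
        Finset.sum_le_sum fun i hi => le_of_lt (lt_of_not_ge (Finset.mem_filter.mp hi).2)
    _ ≤ ∑ i ∈ freeSupp y, min (nI i) (nI (g⁻¹ • i)) :=
        Finset.sum_le_sum_of_subset_of_nonneg (Finset.filter_subset _ _)
          (fun i _ _ => le_min (hI0 _) (hI0 _))
  -- S is covered by Bfin ∪ g • Bfin
  have hScard : S.card ≤ 2 * Bfin.card := by
    have hsub : S ⊆ Bfin ∪ Bfin.image (fun i => g • i) := by
      intro i hi
      have hmin := (Finset.mem_filter.mp hi).2
      rcases min_le_iff.mp hmin with h | h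
      · exact Finset.mem_union_left _ (by simp [hBfin, Set.Finite.mem_toFinset, h])
      · refine Finset.mem_union_right _ (Finset.mem_image.mpr ⟨g⁻¹ • i, ?_, smul_inv_smul g i⟩)
        simp [hBfin, Set.Finite.mem_toFinset, h]
    calc S.card ≤ (Bfin ∪ Bfin.image (fun i => g • i)).card := Finset.card_le_card hsub
    _ ≤ Bfin.card + (Bfin.image (fun i => g • i)).card := Finset.card_union_le _ _
    _ ≤ Bfin.card + Bfin.card := by
        exact Nat.add_le_add_left (Finset.card_image_le) _
    _ = 2 * Bfin.card := by ring
  -- arithmetic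
  set N : ℝ := ((freeSupp y).card : ℝ)
  set b : ℝ := (Bfin.card : ℝ)
  have key : 2 * C * (T.card : ℝ) + N ≤ C * N := by
    have : (T.card : ℝ) * (2*C) + ((freeSupp y).card : ℝ) ≤ freeLen nI nD y g := by
      rw [hsplit]; exact add_le_add hTm hSva
    calc 2 * C * (T.card : ℝ) + N = (T.card : ℝ) * (2*C) + ((freeSupp y).card : ℝ) := by ring
    _ ≤ freeLen nI nD y g := this
    _ ≤ C * N := hle
  have hNst : N = (S.card : ℝ) + (T.card : ℝ) := by
    rw [← Nat.cast_add, hST]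
  have hsb : (S.card : ℝ) ≤ 2 * b := by
    show (S.card : ℝ) ≤ 2 * (Bfin.card : ℝ); exact_mod_cast hScard
  have hN0 : 0 ≤ N := Nat.cast_nonneg _
  have hT0 : (0:ℝ) ≤ (T.card : ℝ) := Nat.cast_nonneg _
  -- 2C·t ≤ (C-1)·N ≤ C·N ⇒ t ≤ N/2 ⇒ N ≤ 2·|S| ≤ 4b
  have ht : (T.card : ℝ) ≤ N / 2 := by nlinarith
  have hN4b : N ≤ 4 * b := by
    have : N / 2 ≤ (S.card : ℝ) := by linarith
    linarith
  rw [hcard]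
  calc freeLen nI nD y g ≤ C * N := hle
  _ ≤ C * (4 * b) := by nlinarith
  _ = 4 * C * (Bfin.card : ℝ) := by ring
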